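/- Let W ⊆ E be a linear subspace that is stable under z and contained in im(z). Then the restriction of C to (z^{-1}W) ∩ W^⊥ is an isometric linear isomorphism onto ℂ², i.e. it is bijective onto ℂ² and satisfies ⟨C(v), C(w)⟩ = ⟨v, w⟩_E for all v, w ∈ (z^{-1}W) ∩ W^⊥. -/

import Mathlib

open scoped ComplexInnerProductSpace

noncomputable section

abbrev E (N : ℕ) := EuclideanSpace ℂ (Fin N ⊕ Fin N)

def zmap (N : ℕ) : E N →ₗ[ℂ] E N where
  toFun v := WithLp.toLp 2 (fun i =>
    match i with
    | Sum.inl j => if h : (j : ℕ) + 1 < N then v (Sum.inl ⟨(j : ℕ) + 1, h⟩) else 0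
    | Sum.inr j => if h : (j : ℕ) + 1 < N then v (Sum.inr ⟨(j : ℕ) + 1, h⟩) else 0)
  map_add' u v := by
    ext i
    rcases i with j | j <;> simp only [PiLp.add_apply, PiLp.toLp_apply] <;> split <;> simp
  map_smul' c v := by
    ext i
    rcases i with j | j <;> simp only [PiLp.smul_apply, PiLp.toLp_apply, RingHom.id_apply, smul_eq_mul] <;>
      split <;> simp

def Cmap (N : ℕ) : E N →ₗ[ℂ] EuclideanSpace ℂ (Fin 2) where
  toFun v := WithLp.toLp 2 (fun i : Fin 2 => if i = 0 then ∑ j : Fin N, v (Sum.inl j) else ∑ j : Fin N, v (Sum.inr j))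
  map_add' u v := by
    ext i
    by_cases h : i = (0 : Fin 2) <;> simp [h, PiLp.add_apply, Finset.sum_add_distrib]
  map_smul' c v := by
    ext i
    by_cases h : i = (0 : Fin 2) <;> simp [h, PiLp.smul_apply, Finset.mul_sum]

/-- `Ym N m` : complete flags `0 = L_0 ⊊ L_1 ⊊ … ⊊ L_m` of `z`-stable subspaces of `E`
with `dim L_j = j`.  A tuple `(L_1,…,L_m) ∈ Y_m` is encoded as the function
`L : Fin (m+1) → Submodule ℂ (E N)` with the convention `L 0 = 0`. -/
def Ym (N m : ℕ) : Set (Fin (m + 1) → Submodule ℂ (E N)) :=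
  {L | L 0 = ⊥ ∧ StrictMono L ∧ (∀ j : Fin (m + 1), Module.finrank ℂ (L j) = (j : ℕ)) ∧
    ∀ j : Fin (m + 1), (L j).map (zmap N) ≤ L j}

/-- The map `φ_m`, in coordinates: `φ_m(L)_j = C(L_{j+1} ∩ L_j^⊥)` (0-based `j`),
i.e. the tuple `(C(L_1), C(L_2 ∩ L_1^⊥), …, C(L_m ∩ L_{m-1}^⊥))`. -/
def phiRaw (N m : ℕ) (L : Fin (m + 1) → Submodule ℂ (E N)) :
    Fin m → Submodule ℂ (EuclideanSpace ℂ (Fin 2)) :=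
  fun j => ((L j.succ) ⊓ (L j.castSucc)ᗮ).map (Cmap N)

/-- `X_{m,i} = {(L_1,…,L_m) ∈ Y_m : L_{i+1} = z^{-1}(L_{i-1})}` (with `L_0 = 0`). -/
def Xmi (N m i : ℕ) : Set (Fin (m + 1) → Submodule ℂ (E N)) :=
  {L | L ∈ Ym N m ∧ ∀ (h : i + 1 < m + 1) (h' : i - 1 < m + 1),
    L ⟨i + 1, h⟩ = (L ⟨i - 1, h'⟩).comap (zmap N)}

/-- `A_{m,i} = {(l_1,…,l_m) ∈ (ℙ¹)^m : l_{i+1} = l_i^⊥}`; a point of `(ℙ¹)^m` is encoded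
as a tuple of rank-one subspaces of `ℂ²`, the line `l_k` sitting at 0-based index `k-1`. -/
def Ami (m i : ℕ) : Set (Fin m → Submodule ℂ (EuclideanSpace ℂ (Fin 2))) :=
  {l | (∀ j, Module.finrank ℂ (l j) = 1) ∧
    ∀ (h : i < m) (h' : i - 1 < m), l ⟨i, h⟩ = (l ⟨i - 1, h'⟩)ᗮ}

/-- `q_{m,i}(L_1,…,L_m) = (L_1,…,L_{i-1}, zL_{i+2},…,zL_m)`. -/
def qRaw (N m i : ℕ) (hm : 2 ≤ m) (L : Fin (m + 1) → Submodule ℂ (E N)) :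
    Fin (m - 2 + 1) → Submodule ℂ (E N) :=
  fun j =>
    if (j : ℕ) < i then L ⟨(j : ℕ), by have := j.isLt; omega⟩
    else (L ⟨(j : ℕ) + 2, by have := j.isLt; omega⟩).map (zmap N)

/-- The forgetful map `g_{m,i}(l_1,…,l_m) = (l_1,…,l_{i-1}, l_{i+2},…,l_m)`. -/
def gRaw (m i : ℕ) (l : Fin m → Submodule ℂ (EuclideanSpace ℂ (Fin 2))) :
    Fin (m - 2) → Submodule ℂ (EuclideanSpace ℂ (Fin 2)) :=
  fun k =>
    if (k : ℕ) + 1 < i then l ⟨(k : ℕ), by have := k.isLt; omega⟩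
    else l ⟨(k : ℕ) + 2, by have := k.isLt; omega⟩

/-- The involution `I_{2n}` of `(ℙ¹)^m`: `l_j ↦ l_j` for `j` odd, `l_j ↦ l_j^⊥` for `j` even
(the line `l_j` sits at 0-based index `j-1`). -/
def Imap (m : ℕ) (l : Fin m → Submodule ℂ (EuclideanSpace ℂ (Fin 2))) :
    Fin m → Submodule ℂ (EuclideanSpace ℂ (Fin 2)) :=
  fun k => if (k : ℕ) % 2 = 0 then l k else (l k)ᗮ

/-- A crossingless matching of the `2n` points `{1,…,2n}`: a partition of `{1,…,2n}` into
`n` pairs (each pair recorded as `(i,j)` with `i < j`) such that there is no quadruple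
`i < j < k < l` with `(i,k)` and `(j,l)` paired. -/
structure CrossinglessMatching (n : ℕ) where
  pairs : Finset (ℕ × ℕ)
  card_eq : pairs.card = n
  lt : ∀ p ∈ pairs, p.1 < p.2
  mem_range : ∀ p ∈ pairs, 1 ≤ p.1 ∧ p.2 ≤ 2 * n
  cover : ∀ k, 1 ≤ k → k ≤ 2 * n → ∃! p, p ∈ pairs ∧ (p.1 = k ∨ p.2 = k)
  noncross : ∀ i j k l : ℕ, i < j → j < k → k < l → (i, k) ∈ pairs → (j, l) ∉ pairs

/-- `{(L_1,…,L_m) ∈ Y_m : L_{s_a(j)} = z^{-d_a(j)} L_{j-1} for all j ∈ O_a}`, where for a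
pair `(i,j)` of the matching, `s_a(i) = j`, `d_a(i) = (j-i+1)/2`, and `z^{-d}` is the
`d`-fold preimage under `z`. -/
def KaSet (N m : ℕ) (pairs : Finset (ℕ × ℕ)) : Set (Fin (m + 1) → Submodule ℂ (E N)) :=
  {L | L ∈ Ym N m ∧ ∀ p ∈ pairs,
    L (Fin.ofNat (m + 1) p.2) =
      (L (Fin.ofNat (m + 1) (p.1 - 1 : ℕ))).comap ((zmap N) ^ ((p.2 - p.1 + 1) / 2))}

/-- `S_a = {(l_1,…,l_{2n}) ∈ (ℙ¹)^{2n} : l_{s_a(j)} = l_j ∀ j ∈ O_a}` (0-based indexing, so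
`l_k` sits at index `k-1`). -/
def SaSet (m : ℕ) (pairs : Finset (ℕ × ℕ)) :
    Set (Fin m → Submodule ℂ (EuclideanSpace ℂ (Fin 2))) :=
  {l | (∀ j, Module.finrank ℂ (l j) = 1) ∧
    ∀ p ∈ pairs, ∀ (h2 : p.2 - 1 < m) (h1 : p.1 - 1 < m), l ⟨p.2 - 1, h2⟩ = l ⟨p.1 - 1, h1⟩}

/-- `T_a = {(l_1,…,l_{2n}) ∈ (ℙ¹)^{2n} : l_{s_a(j)} = l_j^⊥ ∀ j ∈ O_a}`. -/
def TaSet (m : ℕ) (pairs : Finset (ℕ × ℕ)) :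
    Set (Fin m → Submodule ℂ (EuclideanSpace ℂ (Fin 2))) :=
  {l | (∀ j, Module.finrank ℂ (l j) = 1) ∧
    ∀ p ∈ pairs, ∀ (h2 : p.2 - 1 < m) (h1 : p.1 - 1 < m), l ⟨p.2 - 1, h2⟩ = (l ⟨p.1 - 1, h1⟩)ᗮ}
section AuxLemmas

open Finset in
/-- trichotomy decomposition of a sum over `Fin N`. -/
lemma tri_sum {M : Type*} [AddCommMonoid M] {N : ℕ} (f : Fin N → M) (j : Fin N) :
    ∑ k, f k = f j + (∑ k, if j < k then f k else 0) + ∑ k, if k < j then f k else 0 := by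
  have h : ∀ k : Fin N, f k =
      (if k = j then f k else 0) + (if j < k then f k else 0) + (if k < j then f k else 0) := by
    intro k
    rcases lt_trichotomy k j with h | h | h
    · simp [h, h.ne, not_lt_of_gt h]
    · simp [h, lt_irrefl]
    · simp [h, h.ne', not_lt_of_gt h]
  rw [Finset.sum_congr rfl fun k _ => h k, Finset.sum_add_distrib, Finset.sum_add_distrib,
    Finset.sum_ite_eq' Finset.univ j f, if_pos (Finset.mem_univ j)]

/-- the basic scalar triangle identity. -/
lemma scalar_tri {N : ℕ} (a b : Fin N → ℂ) :
    (∑ k, a k) * (∑ k, b k) =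
      (∑ j, a j * b j) + (∑ j, (∑ k, if j < k then a k else 0) * b j)
        + ∑ j, a j * (∑ k, if j < k then b k else 0) := by
  rw [Finset.sum_mul_sum, Finset.sum_comm]
  have h : ∀ j : Fin N, (∑ k, a k * b j) =
      a j * b j + (∑ k, if j < k then a k * b j else 0)
        + ∑ k, if k < j then a k * b j else 0 := fun j => tri_sum (fun k => a k * b j) j
  rw [Finset.sum_congr rfl fun j _ => h j, Finset.sum_add_distrib, Finset.sum_add_distrib]
  congr 1
  · congr 1
    refine Finset.sum_congr rfl fun j _ => ?_
    rw [Finset.sum_mul]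
    exact Finset.sum_congr rfl fun k _ => by rw [ite_mul, zero_mul]
  · rw [Finset.sum_comm]
    refine Finset.sum_congr rfl fun j _ => ?_
    rw [Finset.mul_sum]
    exact Finset.sum_congr rfl fun k _ => by rw [mul_ite, mul_zero]

end AuxLemmas
section AuxLemmas2

lemma zmap_apply_inl {N : ℕ} (v : E N) (j : Fin N) :
    zmap N v (Sum.inl j) = if h : (j : ℕ) + 1 < N then v (Sum.inl ⟨(j : ℕ) + 1, h⟩) else 0 := rfl

lemma zmap_apply_inr {N : ℕ} (v : E N) (j : Fin N) :
    zmap N v (Sum.inr j) = if h : (j : ℕ) + 1 < N then v (Sum.inr ⟨(j : ℕ) + 1, h⟩) else 0 := rfl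

lemma zmap_pow_apply_inl {N : ℕ} (d : ℕ) (v : E N) (j : Fin N) :
    ((zmap N ^ d) v) (Sum.inl j) =
      if h : (j : ℕ) + d < N then v (Sum.inl ⟨(j : ℕ) + d, h⟩) else 0 := by
  induction d generalizing v j with
  | zero =>
    rw [pow_zero]
    simp [j.isLt]
  | succ d ih =>
    rw [pow_succ, Module.End.mul_apply, ih]
    by_cases h : (j : ℕ) + d < N
    · rw [dif_pos h, zmap_apply_inl]
      by_cases h' : (j : ℕ) + d + 1 < N
      · rw [dif_pos h', dif_pos (show (j : ℕ) + (d + 1) < N by omega)]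
        exact congrArg _ (by simp [Fin.ext_iff, Nat.add_assoc])
      · rw [dif_neg h', dif_neg (show ¬ (j : ℕ) + (d + 1) < N by omega)]
    · rw [dif_neg h, dif_neg (show ¬ (j : ℕ) + (d + 1) < N by omega)]

lemma zmap_pow_apply_inr {N : ℕ} (d : ℕ) (v : E N) (j : Fin N) :
    ((zmap N ^ d) v) (Sum.inr j) =
      if h : (j : ℕ) + d < N then v (Sum.inr ⟨(j : ℕ) + d, h⟩) else 0 := by
  induction d generalizing v j with
  | zero =>
    rw [pow_zero]
    simp [j.isLt]
  | succ d ih =>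
    rw [pow_succ, Module.End.mul_apply, ih]
    by_cases h : (j : ℕ) + d < N
    · rw [dif_pos h, zmap_apply_inr]
      by_cases h' : (j : ℕ) + d + 1 < N
      · rw [dif_pos h', dif_pos (show (j : ℕ) + (d + 1) < N by omega)]
        exact congrArg _ (by simp [Fin.ext_iff, Nat.add_assoc])
      · rw [dif_neg h', dif_neg (show ¬ (j : ℕ) + (d + 1) < N by omega)]
    · rw [dif_neg h, dif_neg (show ¬ (j : ℕ) + (d + 1) < N by omega)]

/-- reindexing: summing shifted entries gives the tail sum. -/
lemma sum_shift {N : ℕ} (c : Fin N → ℂ) (j : Fin N) :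
    (∑ d ∈ Finset.range N, if h : (j : ℕ) + (d + 1) < N then c ⟨(j : ℕ) + (d + 1), h⟩ else 0)
      = ∑ k, if j < k then c k else 0 := by
  set g : ℕ → ℂ := fun m => if h : m < N then c ⟨m, h⟩ else 0 with hg
  have h1 : ∀ d, (if h : (j : ℕ) + (d + 1) < N then c ⟨(j : ℕ) + (d + 1), h⟩ else 0)
      = g ((j : ℕ) + 1 + d) := by
    intro d
    have : (j : ℕ) + 1 + d = (j : ℕ) + (d + 1) := by omega
    rw [hg, this]
  rw [Finset.sum_congr rfl fun d _ => h1 d]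
  have h2 := Finset.sum_Ico_eq_sum_range g ((j : ℕ) + 1) ((j : ℕ) + 1 + N)
  rw [Nat.add_sub_cancel_left] at h2
  rw [← h2]
  have h3 : ∑ m ∈ Finset.Ico ((j : ℕ) + 1) ((j : ℕ) + 1 + N), g m
      = ∑ m ∈ Finset.Ico ((j : ℕ) + 1) N, g m := by
    refine (Finset.sum_subset (Finset.Ico_subset_Ico_right (by omega)) ?_).symm
    intro m hm hm'
    simp only [Finset.mem_Ico] at hm hm'
    exact dif_neg (by omega)
  rw [h3, ← Finset.sum_filter]
  refine (Finset.sum_bij' (fun (k : Fin N) _ => (k : ℕ))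
    (fun m hm => (⟨m, (Finset.mem_Ico.1 hm).2⟩ : Fin N)) ?_ ?_ ?_ ?_ ?_).symm
  · intro k hk
    simp only [Finset.mem_filter, Finset.mem_univ, true_and, Fin.lt_def] at hk
    simp only [Finset.mem_Ico]
    omega
  · intro m hm
    simp only [Finset.mem_Ico] at hm
    simp only [Finset.mem_filter, Finset.mem_univ, true_and, Fin.lt_def]
    omega
  · intro k _
    rfl
  · intro m _
    rfl
  · intro k _
    simp [hg, k.isLt]

end AuxLemmas2
section AuxLemmas3

lemma sumU_apply_inl {N : ℕ} (v : E N) (j : Fin N) :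
    (∑ d ∈ Finset.range N, (zmap N ^ (d + 1)) v) (Sum.inl j)
      = ∑ k, if j < k then v (Sum.inl k) else 0 := by
  rw [WithLp.ofLp_sum, Finset.sum_apply, Finset.sum_congr rfl fun d _ => zmap_pow_apply_inl (d + 1) v j]
  exact sum_shift (fun k => v (Sum.inl k)) j

lemma sumU_apply_inr {N : ℕ} (v : E N) (j : Fin N) :
    (∑ d ∈ Finset.range N, (zmap N ^ (d + 1)) v) (Sum.inr j)
      = ∑ k, if j < k then v (Sum.inr k) else 0 := by
  rw [WithLp.ofLp_sum, Finset.sum_apply, Finset.sum_congr rfl fun d _ => zmap_pow_apply_inr (d + 1) v j]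
  exact sum_shift (fun k => v (Sum.inr k)) j

lemma scalar_tri_conj {N : ℕ} (a b : Fin N → ℂ) :
    (starRingEnd ℂ) (∑ k, a k) * (∑ k, b k) =
      (∑ j, (starRingEnd ℂ) (a j) * b j)
      + (∑ j, (starRingEnd ℂ) (∑ k, if j < k then a k else 0) * b j)
      + ∑ j, (starRingEnd ℂ) (a j) * (∑ k, if j < k then b k else 0) := by
  rw [map_sum, scalar_tri (fun k => (starRingEnd ℂ) (a k)) b]
  congr 2
  refine Finset.sum_congr rfl fun j _ => ?_
  congr 1
  rw [map_sum]
  exact Finset.sum_congr rfl fun k _ => by rw [apply_ite (starRingEnd ℂ), map_zero]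

lemma cmap_apply_zero {N : ℕ} (v : E N) : Cmap N v 0 = ∑ j, v (Sum.inl j) := rfl

lemma cmap_apply_one {N : ℕ} (v : E N) : Cmap N v 1 = ∑ j, v (Sum.inr j) := rfl

end AuxLemmas3
theorem cmap_isometric_bijective (N : ℕ) (hN : 1 ≤ N)
    (W : Submodule ℂ (E N)) (hstab : W.map (zmap N) ≤ W)
    (him : W ≤ LinearMap.range (zmap N)) :
    Function.Bijective (fun v : ↥(W.comap (zmap N) ⊓ Wᗮ) => Cmap N (v : E N)) ∧
    ∀ v w : E N, v ∈ W.comap (zmap N) ⊓ Wᗮ → w ∈ W.comap (zmap N) ⊓ Wᗮ →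
      ⟪Cmap N v, Cmap N w⟫ = ⟪v, w⟫ := by
  classical
  have hpow : ∀ (x : E N), zmap N x ∈ W → ∀ d : ℕ, (zmap N ^ (d + 1)) x ∈ W := by
    intro x hx d
    induction d with
    | zero => rwa [pow_one]
    | succ d ih =>
      have h : (zmap N ^ (d + 1 + 1)) x = zmap N ((zmap N ^ (d + 1)) x) := by
        rw [pow_succ']
        rfl
      rw [h]
      exact hstab ⟨_, ih, rfl⟩
  have key : ∀ v w : E N, v ∈ W.comap (zmap N) ⊓ Wᗮ → w ∈ W.comap (zmap N) ⊓ Wᗮ →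
      ⟪Cmap N v, Cmap N w⟫ = ⟪v, w⟫ := by
    intro v w hv hw
    obtain ⟨hv1, hv2⟩ := Submodule.mem_inf.1 hv
    obtain ⟨hw1, hw2⟩ := Submodule.mem_inf.1 hw
    rw [Submodule.mem_comap] at hv1 hw1
    set uv : E N := ∑ d ∈ Finset.range N, (zmap N ^ (d + 1)) v with huv
    set uw : E N := ∑ d ∈ Finset.range N, (zmap N ^ (d + 1)) w with huw
    have huvW : uv ∈ W := Submodule.sum_mem _ fun d _ => hpow v hv1 d
    have huwW : uw ∈ W := Submodule.sum_mem _ fun d _ => hpow w hw1 d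
    have hz1 : ⟪uv, w⟫ = 0 := (Submodule.mem_orthogonal W w).1 hw2 uv huvW
    have hz2 : ⟪v, uw⟫ = 0 := by
      rw [inner_eq_zero_symm]
      exact (Submodule.mem_orthogonal W v).1 hv2 uw huwW
    have euvl : ∀ j, uv (Sum.inl j) = ∑ k, if j < k then v (Sum.inl k) else 0 :=
      fun j => by rw [huv]; exact sumU_apply_inl v j
    have euvr : ∀ j, uv (Sum.inr j) = ∑ k, if j < k then v (Sum.inr k) else 0 :=
      fun j => by rw [huv]; exact sumU_apply_inr v j
    have euwl : ∀ j, uw (Sum.inl j) = ∑ k, if j < k then w (Sum.inl k) else 0 :=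
      fun j => by rw [huw]; exact sumU_apply_inl w j
    have euwr : ∀ j, uw (Sum.inr j) = ∑ k, if j < k then w (Sum.inr k) else 0 :=
      fun j => by rw [huw]; exact sumU_apply_inr w j
    have e1 : ⟪Cmap N v, Cmap N w⟫ = ⟪v, w⟫ + ⟪uv, w⟫ + ⟪v, uw⟫ := by
      simp only [PiLp.inner_apply, RCLike.inner_apply', Fintype.sum_sum_type, Fin.sum_univ_two,
        cmap_apply_zero, cmap_apply_one, euvl, euvr, euwl, euwr]
      rw [scalar_tri_conj (fun k => v (Sum.inl k)) (fun k => w (Sum.inl k)),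
        scalar_tri_conj (fun k => v (Sum.inr k)) (fun k => w (Sum.inr k))]
      ring
    rw [e1, hz1, hz2, add_zero, add_zero]
  refine ⟨?_, key⟩
  -- kernel of z has dimension ≥ 2
  set i0 : Fin N := ⟨0, hN⟩ with hi0
  set e0 : E N := EuclideanSpace.single (Sum.inl i0) 1 with he0def
  set f0 : E N := EuclideanSpace.single (Sum.inr i0) 1 with hf0def
  have he0 : e0 ∈ LinearMap.ker (zmap N) := by
    rw [LinearMap.mem_ker]
    ext x
    rcases x with j | j
    · rw [zmap_apply_inl]
      split
      · simp [he0def, EuclideanSpace.single_apply, Fin.ext_iff]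
      · rfl
    · rw [zmap_apply_inr]
      split
      · simp [he0def, EuclideanSpace.single_apply]
      · rfl
  have hf0 : f0 ∈ LinearMap.ker (zmap N) := by
    rw [LinearMap.mem_ker]
    ext x
    rcases x with j | j
    · rw [zmap_apply_inl]
      split
      · simp [hf0def, EuclideanSpace.single_apply]
      · rfl
    · rw [zmap_apply_inr]
      split
      · simp [hf0def, EuclideanSpace.single_apply, Fin.ext_iff]
      · rfl
  have hindep : LinearIndependent ℂ ![e0, f0] := by
    rw [LinearIndependent.pair_iff]
    intro s t hst
    have h1 := congrArg (fun x : E N => x (Sum.inl i0)) hst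
    have h2 := congrArg (fun x : E N => x (Sum.inr i0)) hst
    simp [he0def, hf0def, EuclideanSpace.single_apply] at h1 h2
    exact ⟨h1, h2⟩
  have hker2 : 2 ≤ Module.finrank ℂ (LinearMap.ker (zmap N)) := by
    have hle : Submodule.span ℂ (Set.range ![e0, f0]) ≤ LinearMap.ker (zmap N) := by
      rw [Submodule.span_le]
      rintro x ⟨i, rfl⟩
      fin_cases i
      · exact he0
      · exact hf0
    have hm := Submodule.finrank_mono hle
    rw [finrank_span_eq_card hindep] at hm
    simpa using hm
  have hcomap : Module.finrank ℂ ↥(W.comap (zmap N)) =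
      Module.finrank ℂ ↥W + Module.finrank ℂ ↥(LinearMap.ker (zmap N)) := by
    have h := LinearMap.finrank_range_add_finrank_ker ((zmap N).domRestrict (W.comap (zmap N)))
    rw [LinearMap.range_domRestrict, Submodule.map_comap_eq, inf_eq_right.2 him,
      LinearMap.ker_domRestrict] at h
    have hker_le : LinearMap.ker (zmap N) ≤ W.comap (zmap N) := by
      intro x hx
      rw [Submodule.mem_comap, LinearMap.mem_ker.1 hx]
      exact W.zero_mem
    rw [(Submodule.comapSubtypeEquivOfLe hker_le).finrank_eq] at h
    omega
  have hE : Module.finrank ℂ (E N) = N + N := by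
    rw [finrank_euclideanSpace]
    simp
  have horth := Submodule.finrank_add_finrank_orthogonal W
  have hsup := Submodule.finrank_sup_add_finrank_inf_eq (W.comap (zmap N)) Wᗮ
  have hsuple : Module.finrank ℂ ↥(W.comap (zmap N) ⊔ Wᗮ) ≤ Module.finrank ℂ (E N) :=
    Submodule.finrank_le _
  have hdim2 : 2 ≤ Module.finrank ℂ ↥(W.comap (zmap N) ⊓ Wᗮ) := by omega
  have hinj : Function.Injective
      ((Cmap N).domRestrict (W.comap (zmap N) ⊓ Wᗮ)) := by
    rw [← LinearMap.ker_eq_bot]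
    rw [Submodule.eq_bot_iff]
    intro x hx
    rw [LinearMap.mem_ker, LinearMap.domRestrict_apply] at hx
    have h := key ↑x ↑x x.2 x.2
    rw [hx] at h
    simp only [inner_zero_left] at h
    have : (x : E N) = 0 := inner_self_eq_zero.1 h.symm
    exact Subtype.ext this
  have hle2 : Module.finrank ℂ ↥(W.comap (zmap N) ⊓ Wᗮ) ≤ 2 := by
    have h := LinearMap.finrank_le_finrank_of_injective hinj
    rw [finrank_euclideanSpace] at h
    simpa using h
  have hfr : Module.finrank ℂ ↥(W.comap (zmap N) ⊓ Wᗮ) =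
      Module.finrank ℂ (EuclideanSpace ℂ (Fin 2)) := by
    rw [finrank_euclideanSpace]
    simp
    omega
  have hsurj : Function.Surjective
      ((Cmap N).domRestrict (W.comap (zmap N) ⊓ Wᗮ)) :=
    (LinearMap.injective_iff_surjective_of_finrank_eq_finrank hfr).1 hinj
  exact ⟨hinj, hsurj⟩
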